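/- Let d ≥ 1, σ > 0, and let u : ℝ^d → ℝ be bounded and measurable. Then the gradient of the Gaussian smoothing f of u admits the antithetic representation ∇f(x) = ∫_{ℝ^d} (z/(2σ²)) · (u(x+z) − u(x−z)) ρ_σ(z) dz for every x ∈ ℝ^d. -/

import Mathlib

set_option maxHeartbeats 1000000

open MeasureTheory Real

noncomputable def gaussDensity (d : ℕ) (σ : ℝ) (z : EuclideanSpace ℝ (Fin d)) : ℝ :=
  (2 * Real.pi * σ ^ 2) ^ (-(d : ℝ) / 2) * Real.exp (-‖z‖ ^ 2 / (2 * σ ^ 2))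

noncomputable def gaussSmooth (d : ℕ) (σ : ℝ) (u : EuclideanSpace ℝ (Fin d) → ℝ)
    (x : EuclideanSpace ℝ (Fin d)) : ℝ :=
  ∫ z, u (x + z) * gaussDensity d σ z


-- aux integrability lemmas, tested standalone first
lemma aux_exp_integrable (d : ℕ) {b : ℝ} (hb : 0 < b) :
    Integrable (fun z : EuclideanSpace ℝ (Fin d) => Real.exp (-b * ‖z‖ ^ 2)) := by
  have h := (GaussianFourier.integrable_cexp_neg_mul_sq_norm_add_of_euclideanSpace
    (ι := Fin d) (b := (b : ℂ)) (by simpa using hb) 0 0).norm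
  refine h.congr (Filter.Eventually.of_forall fun z => ?_)
  show ‖Complex.exp (-(b:ℂ) * (‖z‖:ℂ) ^ 2 + 0 * ((inner ℝ 0 z : ℝ):ℂ))‖ = rexp (-b * ‖z‖ ^ 2)
  rw [Complex.norm_exp]
  congr 1
  simp only [Complex.add_re, Complex.neg_re, Complex.mul_re, Complex.ofReal_re,
    Complex.ofReal_im, ← Complex.ofReal_pow, Complex.zero_re, Complex.zero_im]
  ring

lemma aux_norm_exp_integrable (d : ℕ) {b : ℝ} (hb : 0 < b) :
    Integrable (fun z : EuclideanSpace ℝ (Fin d) => ‖z‖ * Real.exp (-b * ‖z‖ ^ 2)) := by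
  have key : ∀ t : ℝ, 0 ≤ t →
      t * rexp (-b * t ^ 2) ≤ (1 + 1 / (2 * b)) * rexp (-(b / 2) * t ^ 2) := by
    intro t ht
    have h1 : b / 2 * t ^ 2 ≤ rexp (b / 2 * t ^ 2) := by
      have := Real.add_one_le_exp (b / 2 * t ^ 2); linarith
    have h2 : rexp (-b * t ^ 2) ≤ rexp (-(b / 2) * t ^ 2) := by
      apply Real.exp_le_exp.2; nlinarith
    have h3 : t ≤ b * t ^ 2 / 2 + 1 / (2 * b) := by
      have h := sq_nonneg (b * t - 1)
      have hb' := hb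
      rw [div_add_div _ _ (by positivity) (by positivity), le_div_iff₀ (by positivity)]
      nlinarith
    have h4 : rexp (b / 2 * t ^ 2) * rexp (-b * t ^ 2) = rexp (-(b / 2) * t ^ 2) := by
      rw [← Real.exp_add]; congr 1; ring
    have h5 : (0:ℝ) < rexp (-b * t ^ 2) := Real.exp_pos _
    have h6 : (0:ℝ) ≤ 1 / (2 * b) := by positivity
    calc t * rexp (-b * t ^ 2) ≤ (b * t ^ 2 / 2 + 1 / (2 * b)) * rexp (-b * t ^ 2) := by
          exact mul_le_mul_of_nonneg_right h3 h5.le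
      _ = (b / 2 * t ^ 2) * rexp (-b * t ^ 2) + 1 / (2 * b) * rexp (-b * t ^ 2) := by ring
      _ ≤ rexp (b / 2 * t ^ 2) * rexp (-b * t ^ 2) + 1 / (2 * b) * rexp (-(b / 2) * t ^ 2) := by
          gcongr
      _ = (1 + 1 / (2 * b)) * rexp (-(b / 2) * t ^ 2) := by rw [h4]; ring
  refine ((aux_exp_integrable d (half_pos hb)).const_mul (1 + 1 / (2 * b))).mono'
    ((Continuous.aestronglyMeasurable (by fun_prop))) ?_
  refine Filter.Eventually.of_forall fun z => ?_
  have h0 : (0:ℝ) ≤ ‖z‖ * rexp (-b * ‖z‖ ^ 2) := by positivity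
  rw [Real.norm_of_nonneg h0]
  exact key ‖z‖ (norm_nonneg z)

lemma aux_gauss_hasFDerivAt (d : ℕ) {σ : ℝ} (hσ : 0 < σ) (y t : EuclideanSpace ℝ (Fin d)) :
    HasFDerivAt (fun s => gaussDensity d σ (y - s))
      ((gaussDensity d σ (y - t) / σ ^ 2) • (InnerProductSpace.toDual ℝ _ (y - t))) t := by
  have h1 : HasFDerivAt (fun s : EuclideanSpace ℝ (Fin d) => y - s)
      (-(ContinuousLinearMap.id ℝ _)) t := (hasFDerivAt_id t).const_sub y
  have h2 := h1.norm_sq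
  have h3 := ((h2.const_mul ((-1) / (2 * σ ^ 2))).exp).const_mul
    ((2 * Real.pi * σ ^ 2) ^ (-(d : ℝ) / 2))
  have hfun : (fun s => gaussDensity d σ (y - s)) =
      (fun s => (2 * Real.pi * σ ^ 2) ^ (-(d : ℝ) / 2) *
        rexp ((-1) / (2 * σ ^ 2) * ‖y - s‖ ^ 2)) := by
    funext s
    rw [gaussDensity]
    congr 1
    ring
  rw [hfun]
  refine h3.congr_fderiv ?_
  symm
  ext h
  have hσ2 : σ ^ 2 ≠ 0 := by positivity
  simp [gaussDensity, InnerProductSpace.toDual_apply_apply, ContinuousLinearMap.smul_apply,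
    real_inner_smul_left, inner_neg_right, mul_comm]
  field_simp
  ring

/-- antithetic representation of the gradient of the Gaussian smoothing:
`∇f(x) = ∫ (z/(2σ²)) (u(x+z) − u(x−z)) ρ_σ(z) dz`. -/
theorem gaussSmooth_hasGradientAt_antithetic
    (d : ℕ) (hd : 1 ≤ d) (σ : ℝ) (hσ : 0 < σ)
    (u : EuclideanSpace ℝ (Fin d) → ℝ)
    (hu_meas : Measurable u) (hu_bdd : ∃ M : ℝ, ∀ x, |u x| ≤ M)
    (x : EuclideanSpace ℝ (Fin d)) :
    HasGradientAt (gaussSmooth d σ u)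
      (∫ z, (((u (x + z) - u (x - z)) / (2 * σ ^ 2)) * gaussDensity d σ z) • z) x := by
  classical
  obtain ⟨M, hM⟩ := hu_bdd
  have hM0 : 0 ≤ M := le_trans (abs_nonneg _) (hM x)
  have hσ2 : (0:ℝ) < σ ^ 2 := by positivity
  set C : ℝ := (2 * Real.pi * σ ^ 2) ^ (-(d : ℝ) / 2) with hC
  have hC0 : 0 < C := Real.rpow_pos_of_pos (by positivity) _
  have gd_eq : ∀ z : EuclideanSpace ℝ (Fin d),
      gaussDensity d σ z = C * rexp (-(1 / (2 * σ ^ 2)) * ‖z‖ ^ 2) := by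
    intro z; rw [gaussDensity]; congr 1; ring
  have gd_pos : ∀ z : EuclideanSpace ℝ (Fin d), 0 < gaussDensity d σ z := by
    intro z; rw [gd_eq]; positivity
  have gd_cont : Continuous (gaussDensity d σ) := by
    unfold gaussDensity; fun_prop
  have gd_neg : ∀ z : EuclideanSpace ℝ (Fin d), gaussDensity d σ (-z) = gaussDensity d σ z := by
    intro z; rw [gaussDensity, gaussDensity, norm_neg]
  -- the bound for the parametric differentiation
  set Kb : ℝ := M * C * rexp (1 / (2 * σ ^ 2)) / σ ^ 2 with hKb
  set bound : EuclideanSpace ℝ (Fin d) → ℝ :=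
    fun y => Kb * ((‖y - x‖ + 1) * rexp (-(1 / (4 * σ ^ 2)) * ‖y - x‖ ^ 2)) with hbound
  have bound_int : Integrable bound := by
    have h1 : Integrable (fun z : EuclideanSpace ℝ (Fin d) =>
        (‖z‖ + 1) * rexp (-(1 / (4 * σ ^ 2)) * ‖z‖ ^ 2)) := by
      have h2 := (aux_norm_exp_integrable d (b := 1 / (4 * σ ^ 2)) (by positivity)).add
        (aux_exp_integrable d (b := 1 / (4 * σ ^ 2)) (by positivity))
      refine h2.congr (Filter.Eventually.of_forall fun z => ?_)
      simp only [Pi.add_apply]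
      ring
    exact (h1.comp_sub_right x).const_mul Kb
  -- the derivative family
  set F' : EuclideanSpace ℝ (Fin d) → EuclideanSpace ℝ (Fin d) →
      (EuclideanSpace ℝ (Fin d) →L[ℝ] ℝ) :=
    fun t y => ((u y * gaussDensity d σ (y - t)) / σ ^ 2) •
      (InnerProductSpace.toDual ℝ _ (y - t) : EuclideanSpace ℝ (Fin d) →L[ℝ] ℝ) with hF'
  have hF'norm : ∀ t y, ‖F' t y‖ = |u y| * gaussDensity d σ (y - t) / σ ^ 2 * ‖y - t‖ := by
    intro t y
    simp only [hF']
    rw [norm_smul (u y * gaussDensity d σ (y - t) / σ ^ 2)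
      ((InnerProductSpace.toDual ℝ (EuclideanSpace ℝ (Fin d))) (y - t))]
    rw [Real.norm_eq_abs, abs_div, abs_mul, abs_of_pos (gd_pos _), abs_of_pos hσ2]
    have : ‖(InnerProductSpace.toDual ℝ (EuclideanSpace ℝ (Fin d)) (y - t) :
        EuclideanSpace ℝ (Fin d) →L[ℝ] ℝ)‖ = ‖y - t‖ := by
      exact (InnerProductSpace.toDual ℝ _).norm_map (y - t)
    rw [this]
  have h_bound_all : ∀ y : EuclideanSpace ℝ (Fin d), ∀ x' ∈ Metric.ball x 1,
      ‖F' x' y‖ ≤ bound y := by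
    intro y x' hx'
    rw [hF'norm]
    have hd1 : ‖x' - x‖ < 1 := by rwa [Metric.mem_ball, dist_eq_norm] at hx'
    have htri : ‖y - x‖ ≤ ‖y - x'‖ + ‖x' - x‖ := by
      calc ‖y - x‖ = ‖(y - x') + (x' - x)‖ := by abel_nf
        _ ≤ ‖y - x'‖ + ‖x' - x‖ := norm_add_le _ _
    have htri2 : ‖y - x'‖ ≤ ‖y - x‖ + 1 := by
      have : ‖y - x'‖ ≤ ‖y - x‖ + ‖x - x'‖ := by
        calc ‖y - x'‖ = ‖(y - x) + (x - x')‖ := by abel_nf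
          _ ≤ ‖y - x‖ + ‖x - x'‖ := norm_add_le _ _
      rw [norm_sub_rev x x'] at this
      linarith
    have hsq : ‖y - x‖ ^ 2 ≤ 2 + 2 * ‖y - x'‖ ^ 2 := by
      nlinarith [htri, hd1, norm_nonneg (y - x'), norm_nonneg (y - x), norm_nonneg (x' - x),
        sq_nonneg (‖y - x'‖ - 1)]
    have hexp : rexp (-(1 / (2 * σ ^ 2)) * ‖y - x'‖ ^ 2) ≤
        rexp (1 / (2 * σ ^ 2)) * rexp (-(1 / (4 * σ ^ 2)) * ‖y - x‖ ^ 2) := by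
      rw [← Real.exp_add]
      apply Real.exp_le_exp.2
      have key : 1 / (2 * σ ^ 2) + -(1 / (4 * σ ^ 2)) * ‖y - x‖ ^ 2 -
          (-(1 / (2 * σ ^ 2)) * ‖y - x'‖ ^ 2) =
          (2 + 2 * ‖y - x'‖ ^ 2 - ‖y - x‖ ^ 2) / (4 * σ ^ 2) := by
        field_simp; ring
      have hnn : 0 ≤ (2 + 2 * ‖y - x'‖ ^ 2 - ‖y - x‖ ^ 2) / (4 * σ ^ 2) :=
        div_nonneg (by linarith) (by positivity)
      linarith [key ▸ hnn]
    calc |u y| * gaussDensity d σ (y - x') / σ ^ 2 * ‖y - x'‖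
        ≤ M * (C * (rexp (1 / (2 * σ ^ 2)) * rexp (-(1 / (4 * σ ^ 2)) * ‖y - x‖ ^ 2))) / σ ^ 2 *
          (‖y - x‖ + 1) := by
          rw [gd_eq]
          gcongr <;>
            first
              | exact hM y
              | (rw [← mul_assoc] at hexp ⊢; exact hexp)
              | exact htri2
      _ = bound y := by rw [hbound, hKb]; ring
  have hmeas_scal : ∀ t : EuclideanSpace ℝ (Fin d),
      Measurable (fun y => (u y * gaussDensity d σ (y - t)) / σ ^ 2) := fun t =>
    (hu_meas.mul ((gd_cont.comp (continuous_id.sub continuous_const)).measurable)).div_const _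
  have hF'_meas : AEStronglyMeasurable (F' x) volume := by
    apply AEStronglyMeasurable.smul (f := fun y => (u y * gaussDensity d σ (y - x)) / σ ^ 2)
      (g := fun y => (InnerProductSpace.toDual ℝ _ (y - x) : EuclideanSpace ℝ (Fin d) →L[ℝ] ℝ))
    · exact (hmeas_scal x).aestronglyMeasurable
    · exact (((InnerProductSpace.toDual ℝ (EuclideanSpace ℝ (Fin d))).continuous).comp
        (continuous_id.sub continuous_const)).aestronglyMeasurable
  have hF_meas : ∀ᶠ x' in nhds x, AEStronglyMeasurable
      (fun y => u y * gaussDensity d σ (y - x')) volume :=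
    Filter.Eventually.of_forall fun x' =>
      (hu_meas.mul ((gd_cont.comp (continuous_id.sub continuous_const)).measurable)).aestronglyMeasurable
  have hF_int : Integrable (fun y => u y * gaussDensity d σ (y - x)) := by
    refine Integrable.mono' (((aux_exp_integrable d (b := 1 / (2 * σ ^ 2))
      (by positivity)).comp_sub_right x).const_mul (M * C))
      ((hu_meas.mul ((gd_cont.comp
        (continuous_id.sub continuous_const)).measurable)).aestronglyMeasurable)
      (Filter.Eventually.of_forall fun y => ?_)
    rw [Real.norm_eq_abs, abs_mul]
    rw [abs_of_pos (gd_pos _), gd_eq]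
    calc |u y| * (C * rexp (-(1 / (2 * σ ^ 2)) * ‖y - x‖ ^ 2))
        ≤ M * (C * rexp (-(1 / (2 * σ ^ 2)) * ‖y - x‖ ^ 2)) := by
          gcongr; exact hM y
      _ = M * C * rexp (-(1 / (2 * σ ^ 2)) * ‖y - x‖ ^ 2) := by ring
  have h_diff : ∀ᵐ y : EuclideanSpace ℝ (Fin d) ∂volume, ∀ x' ∈ Metric.ball x 1,
      HasFDerivAt (fun t => u y * gaussDensity d σ (y - t)) (F' x' y) x' := by
    refine Filter.Eventually.of_forall fun y => fun x' _ => ?_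
    have h := (aux_gauss_hasFDerivAt d hσ y x').const_mul (u y)
    have e : F' x' y = (u y) • ((gaussDensity d σ (y - x') / σ ^ 2) •
        (InnerProductSpace.toDual ℝ _ (y - x') : EuclideanSpace ℝ (Fin d) →L[ℝ] ℝ)) := by
      rw [hF', smul_smul]
      congr 1
      ring
    rw [e]
    exact h
  have main := hasFDerivAt_integral_of_dominated_of_fderiv_le (𝕜 := ℝ) (μ := volume)
    (F := fun t y => u y * gaussDensity d σ (y - t)) (F' := F') (x₀ := x) (bound := bound)
    (Metric.ball_mem_nhds x one_pos) hF_meas hF_int hF'_meas (Filter.Eventually.of_forall h_bound_all) bound_int h_diff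
  have hfun : (fun t => ∫ y, u y * gaussDensity d σ (y - t)) = gaussSmooth d σ u := by
    funext t
    rw [gaussSmooth, ← integral_sub_right_eq_self
      (fun z => u (t + z) * gaussDensity d σ z) t]
    congr 1
    funext y
    rw [show t + (y - t) = y by abel]
  rw [hfun] at main
  -- integrability of the vector-valued integrands
  have smul_meas : ∀ (g : EuclideanSpace ℝ (Fin d) → ℝ), Measurable g →
      AEStronglyMeasurable (fun z : EuclideanSpace ℝ (Fin d) => g z • z) volume := by
    intro g hg
    exact (hg.aestronglyMeasurable.smul measurable_id.aestronglyMeasurable)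
  set v : EuclideanSpace ℝ (Fin d) → EuclideanSpace ℝ (Fin d) :=
    fun y => ((u y * gaussDensity d σ (y - x)) / σ ^ 2) • (y - x) with hv
  have v_meas : AEStronglyMeasurable v volume :=
    (hmeas_scal x).aestronglyMeasurable.smul
      (continuous_id.sub continuous_const).aestronglyMeasurable
  have v_norm : ∀ y, ‖v y‖ = ‖F' x y‖ := by
    intro y
    rw [hF'norm]
    simp only [hv]
    rw [norm_smul (u y * gaussDensity d σ (y - x) / σ ^ 2) (y - x)]
    rw [Real.norm_eq_abs, abs_div, abs_mul, abs_of_pos (gd_pos _), abs_of_pos hσ2]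
  have int_v : Integrable v := bound_int.mono' v_meas (Filter.Eventually.of_forall fun y => by
    rw [v_norm]; exact h_bound_all y x (Metric.mem_ball_self one_pos))
  have int_F' : Integrable (F' x) := bound_int.mono' hF'_meas
    (Filter.Eventually.of_forall fun y => h_bound_all y x (Metric.mem_ball_self one_pos))
  have step1 : ∫ y, F' x y = (InnerProductSpace.toDual ℝ (EuclideanSpace ℝ (Fin d)))
      (∫ y, v y) := by
    apply ContinuousLinearMap.ext
    intro h
    rw [ContinuousLinearMap.integral_apply int_F']
    rw [InnerProductSpace.toDual_apply_apply]
    rw [real_inner_comm]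
    rw [← integral_inner int_v h]
    congr 1
    funext y
    simp only [hF', hv]
    rw [ContinuousLinearMap.smul_apply, InnerProductSpace.toDual_apply_apply]
    rw [real_inner_smul_right, real_inner_comm, smul_eq_mul]
  have step2 : ∫ y, v y = ∫ z, ((u (x + z) * gaussDensity d σ z) / σ ^ 2) • z := by
    rw [← integral_sub_right_eq_self
      (fun z => ((u (x + z) * gaussDensity d σ z) / σ ^ 2) • z) x]
    congr 1
    funext y
    simp only [hv]
    rw [show x + (y - x) = y by abel]
  set T1 : EuclideanSpace ℝ (Fin d) → EuclideanSpace ℝ (Fin d) :=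
    fun z => ((u (x + z) / (2 * σ ^ 2)) * gaussDensity d σ z) • z with hT1
  set T2 : EuclideanSpace ℝ (Fin d) → EuclideanSpace ℝ (Fin d) :=
    fun z => ((u (x - z) / (2 * σ ^ 2)) * gaussDensity d σ z) • z with hT2
  have int_norm_gauss : Integrable (fun z : EuclideanSpace ℝ (Fin d) =>
      ‖z‖ * rexp (-(1 / (2 * σ ^ 2)) * ‖z‖ ^ 2)) :=
    aux_norm_exp_integrable d (by positivity)
  have Tbound : ∀ (w : ℝ) (hw : |w| ≤ M) (z : EuclideanSpace ℝ (Fin d)),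
      ‖((w / (2 * σ ^ 2)) * gaussDensity d σ z) • z‖ ≤
        M * C / (2 * σ ^ 2) * (‖z‖ * rexp (-(1 / (2 * σ ^ 2)) * ‖z‖ ^ 2)) := by
    intro w hw z
    rw [norm_smul (w / (2 * σ ^ 2) * gaussDensity d σ z) z]
    rw [Real.norm_eq_abs, abs_mul, abs_div, abs_of_pos (gd_pos _), abs_of_pos (by positivity :
      (0:ℝ) < 2 * σ ^ 2), gd_eq]
    calc |w| / (2 * σ ^ 2) * (C * rexp (-(1 / (2 * σ ^ 2)) * ‖z‖ ^ 2)) * ‖z‖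
        ≤ M / (2 * σ ^ 2) * (C * rexp (-(1 / (2 * σ ^ 2)) * ‖z‖ ^ 2)) * ‖z‖ := by gcongr
      _ = M * C / (2 * σ ^ 2) * (‖z‖ * rexp (-(1 / (2 * σ ^ 2)) * ‖z‖ ^ 2)) := by ring
  have intT1 : Integrable T1 := by
    refine (int_norm_gauss.const_mul (M * C / (2 * σ ^ 2))).mono'
      ((((hu_meas.comp (measurable_const.add measurable_id)).div_const _).mul
        gd_cont.measurable).aestronglyMeasurable.smul
        measurable_id.aestronglyMeasurable) (Filter.Eventually.of_forall fun z => ?_)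
    exact Tbound (u (x + z)) (hM _) z
  have intT2 : Integrable T2 := by
    refine (int_norm_gauss.const_mul (M * C / (2 * σ ^ 2))).mono'
      ((((hu_meas.comp (measurable_const.sub measurable_id)).div_const _).mul
        gd_cont.measurable).aestronglyMeasurable.smul
        measurable_id.aestronglyMeasurable) (Filter.Eventually.of_forall fun z => ?_)
    exact Tbound (u (x - z)) (hM _) z
  have split : (fun z => (((u (x + z) - u (x - z)) / (2 * σ ^ 2)) * gaussDensity d σ z) • z)
      = fun z => T1 z - T2 z := by
    funext z
    simp only [hT1, hT2]
    rw [← sub_smul]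
    congr 1
    ring
  have eqT2 : ∫ z, T2 z = - ∫ z, T1 z := by
    rw [← integral_neg_eq_self T2 volume]
    rw [← integral_neg]
    congr 1
    funext z
    simp only [hT1, hT2]
    rw [show x - -z = x + z by abel, gd_neg, smul_neg]
  have key2 : ∫ z, (((u (x + z) - u (x - z)) / (2 * σ ^ 2)) * gaussDensity d σ z) • z
      = ∫ z, ((u (x + z) * gaussDensity d σ z) / σ ^ 2) • z := by
    calc ∫ z, (((u (x + z) - u (x - z)) / (2 * σ ^ 2)) * gaussDensity d σ z) • z
        = ∫ z, (T1 z - T2 z) := by rw [split]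
      _ = (∫ z, T1 z) - ∫ z, T2 z := integral_sub intT1 intT2
      _ = (∫ z, T1 z) + ∫ z, T1 z := by rw [eqT2]; abel
      _ = (2:ℝ) • ∫ z, T1 z := by rw [two_smul]
      _ = ∫ z, (2:ℝ) • T1 z := (integral_smul 2 T1).symm
      _ = ∫ z, ((u (x + z) * gaussDensity d σ z) / σ ^ 2) • z := by
          congr 1
          funext z
          simp only [hT1]
          rw [smul_smul]
          congr 1
          field_simp
  rw [hasGradientAt_iff_hasFDerivAt]
  have final : (InnerProductSpace.toDual ℝ (EuclideanSpace ℝ (Fin d)))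
      (∫ z, (((u (x + z) - u (x - z)) / (2 * σ ^ 2)) * gaussDensity d σ z) • z)
      = ∫ y, F' x y := by
    rw [key2, ← step2, step1]
  rw [final]
  exact main
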